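/- Let 𝓕 = {X; f_λ | λ ∈ Λ} be a parameterized IFS on a compact metric space (X,d) in which every map f_λ is continuous and surjective. If 𝓕 has the average shadowing property, then 𝓕 is chain transitive on the whole space: for every pair of points x, y ∈ X and every ε > 0 there exists an ε-chain from x to y (so 𝓕 has only one chain component, which is all of X). -/

import Mathlib

open Filter Finset

/-- Composition along σ: `IFSIter f σ n = f (σ (n-1)) ∘ ⋯ ∘ f (σ 0)`, with `IFSIter f σ 0 = id`. -/
def IFSIter {X : Type*} {Λ : Type*} (f : Λ → X → X) (σ : ℕ → Λ) : ℕ → X → X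
  | 0 => id
  | n + 1 => f (σ n) ∘ IFSIter f σ n

/-- `(x i)` is a δ-average pseudo-orbit of the IFS `f`. -/
def IsAvgPseudoOrbit {X : Type*} [MetricSpace X] {Λ : Type*}
    (f : Λ → X → X) (δ : ℝ) (x : ℕ → X) : Prop :=
  ∃ N : ℕ, ∃ σ : ℕ → Λ, ∀ n : ℕ, N ≤ n →
    (1 / n : ℝ) * ∑ i ∈ Finset.range n, dist (f (σ i) (x i)) (x (i + 1)) < δ

/-- `(x i)` is ε-shadowed in average by the point `z`. -/
def AvgShadowedBy {X : Type*} [MetricSpace X] {Λ : Type*}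
    (f : Λ → X → X) (ε : ℝ) (x : ℕ → X) (z : X) : Prop :=
  ∃ σ : ℕ → Λ,
    Filter.limsup (fun n : ℕ =>
      (1 / n : ℝ) * ∑ i ∈ Finset.range n, dist (IFSIter f σ i z) (x i)) Filter.atTop < ε

/-- The IFS `f` has the average shadowing property. -/
def HasAvgShadowing {X : Type*} [MetricSpace X] {Λ : Type*} (f : Λ → X → X) : Prop :=
  ∀ ε : ℝ, 0 < ε → ∃ δ : ℝ, 0 < δ ∧
    ∀ x : ℕ → X, IsAvgPseudoOrbit f δ x → ∃ z : X, AvgShadowedBy f ε x z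

/-- An ε-chain of the IFS `f` from `x` to `y`. -/
def IsEpsChain {X : Type*} [MetricSpace X] {Λ : Type*}
    (f : Λ → X → X) (ε : ℝ) (x y : X) : Prop :=
  ∃ n : ℕ, 0 < n ∧ ∃ p : ℕ → X, ∃ lam : ℕ → Λ,
    p 0 = x ∧ p n = y ∧ ∀ i < n, dist (f (lam i) (p i)) (p (i + 1)) ≤ ε

/-- `x` is a chain recurrent point of the IFS `f`. -/
def ChainRecurrentPt {X : Type*} [MetricSpace X] {Λ : Type*}
    (f : Λ → X → X) (x : X) : Prop :=
  ∀ ε : ℝ, 0 < ε → IsEpsChain f ε x x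

/-- decomposition of `2*L*k + r` with `r < 2*L` is unique. -/
lemma enc_inj {L k k' r r' : ℕ} (hL : 0 < L) (hr : r < 2*L) (hr' : r' < 2*L)
    (h : 2*L*k + r = 2*L*k' + r') : k = k' ∧ r = r' := by
  have h2L : 0 < 2*L := by omega
  have m1 : (2*L*k + r) % (2*L) = r := by
    rw [Nat.mul_add_mod]; exact Nat.mod_eq_of_lt hr
  have m2 : (2*L*k' + r') % (2*L) = r' := by
    rw [Nat.mul_add_mod]; exact Nat.mod_eq_of_lt hr'
  have hrr : r = r' := by rw [← m1, ← m2, h]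
  refine ⟨?_, hrr⟩
  have h3 : 2*L*k = 2*L*k' := by omega
  exact Nat.eq_of_mul_eq_mul_left h2L h3

lemma succ_mod_aux (m i : ℕ) (hm : 0 < m) :
    (i % m + 1 = m ∧ (i+1) % m = 0) ∨ (i % m + 1 < m ∧ (i+1) % m = i % m + 1) := by
  have hq : i % m < m := Nat.mod_lt i hm
  have hdm : m * (i / m) + i % m = i := Nat.div_add_mod i m
  rcases eq_or_lt_of_le (Nat.succ_le_of_lt hq) with h | h
  · left
    refine ⟨h, ?_⟩
    have h2 : i + 1 = m * (i / m) + m := by omega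
    rw [h2, Nat.mul_add_mod, Nat.mod_self]
  · right
    refine ⟨h, ?_⟩
    have h2 : i + 1 = m * (i / m) + (i % m + 1) := by omega
    rw [h2, Nat.mul_add_mod, Nat.mod_eq_of_lt h]

/-- a continuous surjective IFS on a compact metric space with the
average shadowing property is chain transitive: any point can be joined to any other
by an ε-chain, for every ε > 0. -/
theorem avgShadowing_chainTransitive
    {X : Type*} [MetricSpace X] [CompactSpace X]
    {Λ : Type*} [Finite Λ] [Nonempty Λ]
    (f : Λ → X → X) (hc : ∀ l : Λ, Continuous (f l))
    (hs : ∀ l : Λ, Function.Surjective (f l))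
    (h : HasAvgShadowing f) :
    ∀ x y : X, ∀ ε : ℝ, 0 < ε → IsEpsChain f ε x y := by
  intro x y ε hε
  -- uniform continuity modulus η
  have h1 : ∀ l : Λ, ∃ d : ℝ, 0 < d ∧ ∀ a b : X, dist a b < d → dist (f l a) (f l b) < ε := by
    intro l
    obtain ⟨d, hd, hdd⟩ := Metric.uniformContinuous_iff.mp
      (CompactSpace.uniformContinuous_of_continuous (hc l)) ε hε
    exact ⟨d, hd, fun a b hab => hdd hab⟩
  choose dl hdl0 hdl using h1
  haveI : Fintype Λ := Fintype.ofFinite Λ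
  have huniv : (Finset.univ : Finset Λ).Nonempty := Finset.univ_nonempty
  set η : ℝ := min (Finset.univ.inf' huniv dl) ε with hηdef
  have hη0 : 0 < η := by
    apply lt_min _ hε
    rw [Finset.lt_inf'_iff]
    exact fun l _ => hdl0 l
  have hηε : η ≤ ε := min_le_right _ _
  have hmod : ∀ (l : Λ) (a b : X), dist a b < η → dist (f l a) (f l b) < ε := by
    intro l a b hab
    exact hdl l a b
      (lt_of_lt_of_le hab (le_trans (min_le_left _ _) (Finset.inf'_le _ (Finset.mem_univ l))))
  -- average shadowing with ε₁ = η/8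
  obtain ⟨δ, hδ0, hδs⟩ := h (η/8) (by positivity)
  -- bound on diameter
  obtain ⟨C, hC⟩ := Metric.isBounded_iff.mp (isCompact_univ (X := X)).isBounded
  set D : ℝ := max C 0 with hDdef
  have hD : ∀ a b : X, dist a b ≤ D := fun a b => le_max_of_le_left (hC trivial trivial)
  have hD0 : (0:ℝ) ≤ D := le_max_right _ _
  -- block length L
  set L : ℕ := ⌈D / δ⌉₊ + 1 with hLdef
  have hL1 : 1 ≤ L := by omega
  have hL0 : 0 < L := hL1
  have h2L : 0 < 2*L := by omega
  have hDL : D / L < δ := by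
    rw [div_lt_iff₀ (by positivity)]
    have ha : D / δ ≤ (⌈D / δ⌉₊ : ℝ) := Nat.le_ceil _
    have hb2 : (⌈D / δ⌉₊ : ℝ) < L := by rw [hLdef]; push_cast; linarith
    have hc2 : D / δ < (L:ℝ) := lt_of_le_of_lt ha hb2
    calc D = δ * (D / δ) := by field_simp
    _ < δ * L := (mul_lt_mul_iff_right₀ hδ0).mpr hc2
  -- backward orbit ending at y
  set lam0 : Λ := Classical.arbitrary Λ with hlam0
  set b : ℕ → X := fun k => (Function.surjInv (hs lam0))^[k] y with hbdef
  have hb : ∀ k, f lam0 (b (k+1)) = b k := by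
    intro k
    rw [hbdef]
    simp only [Function.iterate_succ_apply']
    exact Function.surjInv_eq (hs lam0) _
  have hb0 : b 0 = y := rfl
  -- the pseudo-orbit
  set xo : ℕ → X := fun i =>
    if i % (2*L) < L then (f lam0)^[i % (2*L)] x else b (2*L - 1 - i % (2*L)) with hxodef
  have hmodL : ∀ j : ℕ, j % L = (j % (2*L)) % L := by
    intro j
    exact (Nat.mod_mod_of_dvd j (dvd_mul_left L 2)).symm
  -- pseudo-orbit error pointwise bound
  have estep : ∀ i : ℕ, dist (f lam0 (xo i)) (xo (i+1)) ≤ if (i+1) % L = 0 then D else 0 := by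
    intro i
    have hq : i % (2*L) < 2*L := Nat.mod_lt i h2L
    rcases succ_mod_aux (2*L) i h2L with ⟨hq1, hq2⟩ | ⟨hq1, hq2⟩
    · -- i % 2L = 2L - 1 : jump from y back to x
      have hiL : (i+1) % L = 0 := by rw [hmodL (i+1), hq2, Nat.zero_mod]
      rw [if_pos hiL]
      exact hD _ _
    · by_cases hcase : i % (2*L) + 1 < L
      · -- forward interior
        have hiL : (i+1) % L ≠ 0 := by
          rw [hmodL (i+1), hq2, Nat.mod_eq_of_lt hcase]
          omega
        rw [if_neg hiL]
        have hxi : xo i = (f lam0)^[i % (2*L)] x := by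
          simp only [hxodef]
          rw [if_pos (by omega)]
        have hxi1 : xo (i+1) = (f lam0)^[i % (2*L) + 1] x := by
          simp only [hxodef]
          rw [hq2, if_pos hcase]
        rw [hxi, hxi1, Function.iterate_succ_apply' (f lam0) _ x, dist_self]
      · by_cases hcase2 : i % (2*L) + 1 = L
        · -- jump at the middle of a period
          have hiL : (i+1) % L = 0 := by
            rw [hmodL (i+1), hq2, hcase2, Nat.mod_self]
          rw [if_pos hiL]
          exact hD _ _
        · -- backward interior : L ≤ i % 2L, i % 2L + 1 < 2L
          have hge : L ≤ i % (2*L) := by omega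
          have hiL : (i+1) % L ≠ 0 := by
            rw [hmodL (i+1), hq2, Nat.mod_eq_sub_mod (by omega), Nat.mod_eq_of_lt (by omega)]
            omega
          rw [if_neg hiL]
          have hxi : xo i = b (2*L - 1 - i % (2*L)) := by
            simp only [hxodef]
            rw [if_neg (by omega)]
          have hxi1 : xo (i+1) = b (2*L - 1 - (i % (2*L) + 1)) := by
            simp only [hxodef]
            rw [hq2, if_neg (by omega)]
          have harg : 2*L - 1 - i % (2*L) = (2*L - 1 - (i % (2*L) + 1)) + 1 := by omega
          rw [hxi, hxi1, harg, hb, dist_self]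
  -- the pseudo-orbit is a δ-average pseudo-orbit
  have pseudo : IsAvgPseudoOrbit f δ xo := by
    refine ⟨1, fun _ => lam0, ?_⟩
    intro n hn
    have hn0 : (0:ℝ) < n := by exact_mod_cast hn
    have hcard : ((range n).filter (fun i => (i+1) % L = 0)).card ≤ n / L := by
      have hle : ((range n).filter (fun i => (i+1) % L = 0)).card ≤ (Finset.Icc 1 (n / L)).card := by
        apply Finset.card_le_card_of_injOn (fun i => (i+1)/L)
        · intro i hi
          simp only [Finset.mem_coe, Finset.mem_filter, Finset.mem_range] at hi
          obtain ⟨hin, hiL⟩ := hi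
          have hdvd : L ∣ (i+1) := Nat.dvd_of_mod_eq_zero hiL
          have hLle : L ≤ i + 1 := Nat.le_of_dvd (by omega) hdvd
          simp only [Finset.mem_coe, Finset.mem_Icc]
          exact ⟨(Nat.one_le_div_iff hL0).mpr hLle, Nat.div_le_div_right (by omega)⟩
        · intro a ha b2 hb2 hab
          simp only [Finset.coe_filter, Set.mem_setOf_eq, Finset.mem_range] at ha hb2
          have hda : L ∣ a+1 := Nat.dvd_of_mod_eq_zero ha.2
          have hdb : L ∣ b2+1 := Nat.dvd_of_mod_eq_zero hb2.2
          have hab' : (a+1)/L = (b2+1)/L := hab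
          have : a + 1 = b2 + 1 := by
            rw [← Nat.div_mul_cancel hda, ← Nat.div_mul_cancel hdb, hab']
          omega
      simpa [Nat.card_Icc] using hle
    have hsum : ∑ i ∈ range n, dist (f lam0 (xo i)) (xo (i+1)) ≤ D * ((n / L : ℕ) : ℝ) := by
      calc ∑ i ∈ range n, dist (f lam0 (xo i)) (xo (i+1))
          ≤ ∑ i ∈ range n, (if (i+1) % L = 0 then D else 0) :=
            Finset.sum_le_sum (fun i _ => estep i)
        _ = ∑ i ∈ (range n).filter (fun i => (i+1) % L = 0), D := (Finset.sum_filter _ _).symm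
        _ = (((range n).filter (fun i => (i+1) % L = 0)).card : ℝ) * D := by
            rw [Finset.sum_const, nsmul_eq_mul]
        _ ≤ ((n / L : ℕ) : ℝ) * D := by
            apply mul_le_mul_of_nonneg_right _ hD0
            exact_mod_cast hcard
        _ = D * ((n / L : ℕ) : ℝ) := by ring
    have hcast : ((n / L : ℕ) : ℝ) ≤ (n:ℝ) / L := Nat.cast_div_le
    have hL0' : (0:ℝ) < L := by exact_mod_cast hL0
    calc (1 / n : ℝ) * ∑ i ∈ range n, dist (f lam0 (xo i)) (xo (i+1))
        ≤ (1 / n : ℝ) * (D * ((n:ℝ)/L)) := by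
          apply mul_le_mul_of_nonneg_left _ (by positivity)
          exact le_trans hsum (mul_le_mul_of_nonneg_left hcast hD0)
      _ = D / L := by field_simp
      _ < δ := hDL
  -- apply average shadowing
  obtain ⟨z, σ, hlim⟩ := hδs xo pseudo
  set Z : ℕ → X := fun i => IFSIter f σ i z with hZdef
  have hZs : ∀ i, Z (i+1) = f (σ i) (Z i) := fun i => rfl
  set g : ℕ → ℝ := fun n : ℕ => (1 / n : ℝ) * ∑ i ∈ range n, dist (Z i) (xo i) with hgdef
  have hglim : Filter.limsup g Filter.atTop < η / 8 := hlim
  have hgD : ∀ n, g n ≤ D := by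
    intro n
    rcases Nat.eq_zero_or_pos n with rfl | hn
    · simpa [hgdef] using hD0
    · have hn0 : (0:ℝ) < n := by exact_mod_cast hn
      have : ∑ i ∈ range n, dist (Z i) (xo i) ≤ (n:ℝ) * D := by
        calc ∑ i ∈ range n, dist (Z i) (xo i) ≤ ∑ _i ∈ range n, D :=
              Finset.sum_le_sum (fun i _ => hD _ _)
          _ = (n:ℝ) * D := by rw [Finset.sum_const, nsmul_eq_mul]; simp
      calc g n ≤ (1/(n:ℝ)) * ((n:ℝ) * D) := by
            apply mul_le_mul_of_nonneg_left this (by positivity)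
        _ = D := by field_simp
  have hev := Filter.eventually_lt_of_limsup_lt hglim (Filter.isBoundedUnder_of ⟨D, hgD⟩)
  obtain ⟨M, hM⟩ := Filter.eventually_atTop.mp hev
  set t : ℕ := M + 1 with htdef
  set n : ℕ := 4*(t*L) with hndef
  have htL : 0 < t*L := Nat.mul_pos (by omega) hL0
  have hn0 : 0 < n := by omega
  have htn : M ≤ n := by
    have h5 : t ≤ t * L := Nat.le_mul_of_pos_right t hL0
    omega
  have hgn : g n < η/8 := hM n htn
  have hn0' : (0:ℝ) < n := by exact_mod_cast hn0
  -- the bad set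
  set Bd : Finset ℕ := (range n).filter (fun i => η ≤ dist (Z i) (xo i)) with hBddef
  have hBdsum : (Bd.card : ℝ) * η ≤ ∑ i ∈ range n, dist (Z i) (xo i) := by
    calc (Bd.card:ℝ)*η = ∑ _i ∈ Bd, η := by rw [Finset.sum_const, nsmul_eq_mul]
      _ ≤ ∑ i ∈ Bd, dist (Z i) (xo i) :=
          Finset.sum_le_sum (fun i hi => (Finset.mem_filter.mp hi).2)
      _ ≤ ∑ i ∈ range n, dist (Z i) (xo i) :=
          Finset.sum_le_sum_of_subset_of_nonneg (Finset.filter_subset _ _)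
            (fun i _ _ => dist_nonneg)
  have hsum_eq : ∑ i ∈ range n, dist (Z i) (xo i) = (n:ℝ) * g n := by
    rw [hgdef]
    field_simp
  have hBcard : Bd.card < t*L := by
    have h6 : (Bd.card : ℝ) * η < (n:ℝ) * (η/8) := by
      rw [hsum_eq] at hBdsum
      calc (Bd.card : ℝ) * η ≤ (n:ℝ) * g n := hBdsum
        _ < (n:ℝ) * (η/8) := by exact (mul_lt_mul_iff_right₀ hn0').mpr hgn
    have h7 : (Bd.card : ℝ) < (n:ℝ)/8 := by
      have h6' : (Bd.card : ℝ) * η < ((n:ℝ)/8) * η := by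
        calc (Bd.card : ℝ) * η < (n:ℝ) * (η/8) := h6
          _ = ((n:ℝ)/8) * η := by ring
      exact lt_of_mul_lt_mul_right h6' (le_of_lt hη0)
    have h8 : ((n:ℕ):ℝ) = 4*((t*L:ℕ):ℝ) := by rw [hndef]; push_cast; ring
    have h9 : (Bd.card : ℝ) < ((t*L:ℕ):ℝ) := by
      rw [h8] at h7
      have : (0:ℝ) < ((t*L:ℕ):ℝ) := by exact_mod_cast htL
      linarith
    exact_mod_cast h9
  -- forward and backward position sets
  set F : Finset ℕ := ((range t) ×ˢ (range L)).image (fun p : ℕ×ℕ => 2*L*p.1 + p.2) with hFdef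
  set Bk : Finset ℕ := ((range t) ×ˢ (range L)).image
    (fun p : ℕ×ℕ => 2*L*(t + p.1) + (L + p.2)) with hBkdef
  have hFcard : F.card = t*L := by
    rw [hFdef, Finset.card_image_of_injOn, Finset.card_product, Finset.card_range,
      Finset.card_range]
    intro p hp q hq hpq
    simp only [Finset.coe_product, Set.mem_prod, Finset.mem_coe, Finset.mem_range] at hp hq
    obtain ⟨hk, hr⟩ := enc_inj hL0 (by omega) (by omega) hpq
    exact Prod.ext hk hr
  have hBkcard : Bk.card = t*L := by
    rw [hBkdef, Finset.card_image_of_injOn, Finset.card_product, Finset.card_range,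
      Finset.card_range]
    intro p hp q hq hpq
    simp only [Finset.coe_product, Set.mem_prod, Finset.mem_coe, Finset.mem_range] at hp hq
    obtain ⟨hk, hr⟩ := enc_inj hL0 (by omega) (by omega) hpq
    exact Prod.ext (by omega) (by omega)
  have hFsub : F ⊆ range n := by
    intro i hi
    rw [hFdef, Finset.mem_image] at hi
    obtain ⟨⟨k, r⟩, hkr, rfl⟩ := hi
    rw [Finset.mem_product, Finset.mem_range, Finset.mem_range] at hkr
    obtain ⟨hk, hr⟩ := hkr
    have e1 : 2*L*(k+1) ≤ 2*L*t := Nat.mul_le_mul_left _ (by omega)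
    have e2 : 2*L*(k+1) = 2*L*k + 2*L := by ring
    have e3 : 2*L*t = 2*(t*L) := by ring
    simp only [Finset.mem_range]
    omega
  have hBksub : Bk ⊆ range n := by
    intro i hi
    rw [hBkdef, Finset.mem_image] at hi
    obtain ⟨⟨k, r⟩, hkr, rfl⟩ := hi
    rw [Finset.mem_product, Finset.mem_range, Finset.mem_range] at hkr
    obtain ⟨hk, hr⟩ := hkr
    have e1 : 2*L*(t+k+1) ≤ 2*L*(2*t) := Nat.mul_le_mul_left _ (by omega)
    have e2 : 2*L*(t+k+1) = 2*L*(t+k) + 2*L := by ring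
    have e3 : 2*L*(2*t) = 4*(t*L) := by ring
    simp only [Finset.mem_range]
    omega
  -- pick good times
  have hex : ∀ S : Finset ℕ, S.card = t*L → ∃ i ∈ S, i ∉ Bd := by
    intro S hS
    by_contra hcon
    push_neg at hcon
    have hsub : S ⊆ Bd := hcon
    have := Finset.card_le_card hsub
    omega
  obtain ⟨i1, hi1F, hi1B⟩ := hex F hFcard
  obtain ⟨i2, hi2F, hi2B⟩ := hex Bk hBkcard
  have good : ∀ i ∈ range n, i ∉ Bd → dist (Z i) (xo i) < η := by
    intro i hin hiB
    by_contra hcon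
    exact hiB (Finset.mem_filter.mpr ⟨hin, le_of_not_gt hcon⟩)
  have good1 : dist (Z i1) (xo i1) < η := good i1 (hFsub hi1F) hi1B
  have good2 : dist (Z i2) (xo i2) < η := good i2 (hBksub hi2F) hi2B
  -- unpack i1, i2
  rw [hFdef, Finset.mem_image] at hi1F
  obtain ⟨⟨k1, r1⟩, hkr1, hi1⟩ := hi1F
  rw [Finset.mem_product, Finset.mem_range, Finset.mem_range] at hkr1
  obtain ⟨hk1, hr1⟩ := hkr1
  rw [hBkdef, Finset.mem_image] at hi2F
  obtain ⟨⟨k2, r2⟩, hkr2, hi2⟩ := hi2F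
  rw [Finset.mem_product, Finset.mem_range, Finset.mem_range] at hkr2
  obtain ⟨hk2, hr2⟩ := hkr2
  simp only at hi1 hi2
  have hmod1 : i1 % (2*L) = r1 := by
    rw [← hi1, Nat.mul_add_mod]; exact Nat.mod_eq_of_lt (by omega)
  have hmod2 : i2 % (2*L) = L + r2 := by
    rw [← hi2, Nat.mul_add_mod]; exact Nat.mod_eq_of_lt (by omega)
  have hxo1 : xo i1 = (f lam0)^[r1] x := by
    simp only [hxodef]
    rw [hmod1, if_pos hr1]
  set s : ℕ := L - 1 - r2 with hsdef
  have hxo2 : xo i2 = b s := by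
    simp only [hxodef]
    rw [hmod2, if_neg (by omega)]
    congr 1
    omega
  -- separation
  have hsep : i1 + 2 ≤ i2 := by
    have e1 : 2*L*(k1+1) ≤ 2*L*t := Nat.mul_le_mul_left _ (by omega)
    have e2 : 2*L*(k1+1) = 2*L*k1 + 2*L := by ring
    have e3 : 2*L*t ≤ 2*L*(t+k2) := Nat.mul_le_mul_left _ (by omega)
    omega
  set m : ℕ := i2 - i1 with hmdef
  have hm2 : 2 ≤ m := by omega
  have hi12 : i1 + m = i2 := by omega
  -- build the chain
  refine ⟨r1 + m + s, by omega, ?_⟩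
  set p : ℕ → X := fun j =>
    if j ≤ r1 then (f lam0)^[j] x
    else if j < r1 + m then Z (i1 + (j - r1))
    else b (s - (j - r1 - m)) with hpdef
  set lamc : ℕ → Λ := fun j =>
    if j < r1 then lam0 else if j < r1 + m then σ (i1 + (j - r1)) else lam0 with hlamcdef
  refine ⟨p, lamc, ?_, ?_, ?_⟩
  · simp only [hpdef]
    rw [if_pos (Nat.zero_le _)]
    rfl
  · simp only [hpdef]
    rw [if_neg (by omega), if_neg (by omega)]
    have : s - (r1 + m + s - r1 - m) = 0 := by omega
    rw [this, hb0]
  · intro i hi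
    by_cases c1 : i < r1
    · -- along the forward orbit of x
      have hp1 : p i = (f lam0)^[i] x := by simp only [hpdef]; rw [if_pos (by omega)]
      have hp2 : p (i+1) = (f lam0)^[i+1] x := by simp only [hpdef]; rw [if_pos (by omega)]
      have hl : lamc i = lam0 := by simp only [hlamcdef]; rw [if_pos c1]
      rw [hp1, hp2, hl, ← Function.iterate_succ_apply' (f lam0) i x, dist_self]
      linarith
    · by_cases c2 : i = r1
      · -- jump from the pseudo-orbit to the shadowing orbit
        subst c2
        have hp1 : p i = xo i1 := by
          simp only [hpdef]; rw [if_pos (le_refl i), hxo1]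
        have hp2 : p (i+1) = Z (i1 + 1) := by
          simp only [hpdef]
          rw [if_neg (by omega), if_pos (by omega)]
          congr 1
          omega
        have hl : lamc i = σ i1 := by
          simp only [hlamcdef]
          rw [if_neg (by omega), if_pos (by omega)]
          congr 1
          omega
        rw [hp1, hp2, hl, hZs i1]
        have := hmod (σ i1) (xo i1) (Z i1) (by rw [dist_comm]; exact good1)
        linarith
      · by_cases c3 : i + 1 < r1 + m
        · -- along the shadowing orbit
          have hr1i : r1 < i := by omega
          have hp1 : p i = Z (i1 + (i - r1)) := by
            simp only [hpdef]; rw [if_neg (by omega), if_pos (by omega)]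
          have hp2 : p (i+1) = Z (i1 + (i - r1) + 1) := by
            simp only [hpdef]
            rw [if_neg (by omega), if_pos (by omega)]
            congr 1
            omega
          have hl : lamc i = σ (i1 + (i - r1)) := by
            simp only [hlamcdef]; rw [if_neg (by omega), if_pos (by omega)]
          rw [hp1, hp2, hl, hZs]
          rw [dist_self]
          linarith
        · by_cases c4 : i + 1 = r1 + m
          · -- jump from the shadowing orbit to the backward orbit
            have hr1i : r1 < i := by omega
            have hp1 : p i = Z (i1 + (i - r1)) := by
              simp only [hpdef]; rw [if_neg (by omega), if_pos (by omega)]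
            have hp2 : p (i+1) = xo i2 := by
              simp only [hpdef]
              rw [if_neg (by omega), if_neg (by omega), hxo2]
              congr 1
              omega
            have hl : lamc i = σ (i1 + (i - r1)) := by
              simp only [hlamcdef]; rw [if_neg (by omega), if_pos (by omega)]
            have harg : i1 + (i - r1) + 1 = i2 := by omega
            rw [hp1, hp2, hl, ← hZs, harg]
            linarith [good2]
          · -- along the backward orbit to y
            have hge : r1 + m ≤ i := by omega
            have hu : i - r1 - m < s := by omega
            have hp1 : p i = b (s - (i - r1 - m) - 1 + 1) := by
              simp only [hpdef]
              rw [if_neg (by omega), if_neg (by omega)]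
              congr 1
              omega
            have hp2 : p (i+1) = b (s - (i - r1 - m) - 1) := by
              simp only [hpdef]
              rw [if_neg (by omega), if_neg (by omega)]
              congr 1
              omega
            have hl : lamc i = lam0 := by
              simp only [hlamcdef]; rw [if_neg (by omega), if_neg (by omega)]
            rw [hp1, hp2, hl, hb, dist_self]
            linarith
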